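/- arXiv:1905.12123 — 2 statements merged into one kernel-verified Lean document; each statement's English description precedes it below -/
import Mathlib

section
/- Let S be the sinc function S(x) = sin(πx)/(πx) (S(0)=1) and n ≥ 1. If g is a Schwartz function on ℝⁿ whose Fourier transform ĝ vanishes on the cube [-1,1]ⁿ, then ∫_{ℝⁿ} g(x) · det_{1≤i,j≤n}[S(x_i - x_j)] dⁿx = 0. -/
open MeasureTheory

noncomputable def S (x : ℝ) : ℝ :=
  if x = 0 then 1 else Real.sin (Real.pi * x) / (Real.pi * x)


lemma S_eq_integral (y : ℝ) :
    ((S y : ℝ) : ℂ) = ∫ t in Set.Icc (-(2⁻¹ : ℝ)) 2⁻¹,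
      Complex.exp (2 * Real.pi * Complex.I * ((t * y : ℝ) : ℂ)) := by
  by_cases hy : y = 0
  · subst hy
    simp [S, Complex.exp_zero, Real.volume_Icc]
    norm_num
  · have hπ : (Real.pi : ℂ) ≠ 0 := Complex.ofReal_ne_zero.mpr Real.pi_ne_zero
    have hyC : (y : ℂ) ≠ 0 := Complex.ofReal_ne_zero.mpr hy
    have hc : (2 * (Real.pi:ℂ) * Complex.I * y) ≠ 0 := by
      simp [Complex.I_ne_zero, hπ, hyC]
    have h1 : ∀ t : ℝ, Complex.exp (2 * Real.pi * Complex.I * ((t * y : ℝ) : ℂ))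
        = Complex.exp ((2 * Real.pi * Complex.I * y) * (t : ℂ)) := by
      intro t; push_cast; ring_nf
    simp_rw [h1]
    rw [integral_Icc_eq_integral_Ioc,
      ← intervalIntegral.integral_of_le (by norm_num : (-(2⁻¹:ℝ)) ≤ 2⁻¹),
      integral_exp_mul_complex hc]
    have e1 : (2 * (Real.pi:ℂ) * Complex.I * y) * ((2⁻¹ : ℝ) : ℂ)
        = (Real.pi * y : ℝ) * Complex.I := by push_cast; ring
    have e2 : (2 * (Real.pi:ℂ) * Complex.I * y) * (((-2⁻¹ : ℝ)) : ℂ)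
        = -((Real.pi * y : ℝ) * Complex.I) := by rw [Complex.ofReal_neg]; push_cast; ring
    rw [e1, e2]
    have hs : Complex.exp ((Real.pi * y : ℝ) * Complex.I)
        - Complex.exp (-((Real.pi * y : ℝ) * Complex.I))
        = 2 * Complex.I * Complex.sin ((Real.pi * y : ℝ) : ℂ) := by
      rw [Complex.sin]
      have : Complex.I * Complex.I = -1 := Complex.I_mul_I
      field_simp
      ring_nf
      rw [Complex.I_sq]
      ring
    rw [hs, ← Complex.ofReal_sin]
    have : S y = Real.sin (Real.pi * y) / (Real.pi * y) := by simp [S, hy]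
    rw [this]
    push_cast
    field_simp

lemma norm_exp_I_mul (s : ℝ) : ‖Complex.exp (2 * Real.pi * Complex.I * (s : ℂ))‖ = 1 := by
  rw [Complex.norm_exp]
  have : (2 * (Real.pi:ℂ) * Complex.I * (s : ℂ)).re = 0 := by
    simp [Complex.mul_re, Complex.mul_im]
  rw [this, Real.exp_zero]

lemma S_norm_le (y : ℝ) : ‖((S y : ℝ) : ℂ)‖ ≤ 1 := by
  rw [S_eq_integral]
  have h := norm_setIntegral_le_of_norm_le_const (μ := volume)
    (s := Set.Icc (-(2⁻¹:ℝ)) 2⁻¹) (C := 1)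
    (by rw [Real.volume_Icc]; norm_num)
    (f := fun t => Complex.exp (2 * Real.pi * Complex.I * ((t * y : ℝ) : ℂ)))
    (fun t _ => le_of_eq (norm_exp_I_mul _))
  calc _ ≤ 1 * (volume (Set.Icc (-(2⁻¹:ℝ)) 2⁻¹)).toReal := h
    _ = 1 := by rw [Real.volume_Icc]; norm_num

lemma S_measurable : Measurable S := by
  unfold S
  refine Measurable.ite ?_ measurable_const ?_
  · exact measurableSet_eq
  · fun_prop

lemma box_prod_integral {n : ℕ} (f : Fin n → ℝ → ℂ) :
    (∫ t : Fin n → ℝ in Set.univ.pi fun _ => Set.Icc (-(2⁻¹ : ℝ)) 2⁻¹,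
      ∏ i, f i (t i)) = ∏ i, ∫ s in Set.Icc (-(2⁻¹ : ℝ)) 2⁻¹, f i s := by
  have hIcc : MeasurableSet (Set.Icc (-(2⁻¹ : ℝ)) 2⁻¹) := measurableSet_Icc
  have hBox : MeasurableSet (Set.univ.pi fun _ : Fin n => Set.Icc (-(2⁻¹ : ℝ)) 2⁻¹) :=
    MeasurableSet.univ_pi fun _ => hIcc
  rw [← integral_indicator hBox]
  have key : ∀ t : Fin n → ℝ,
      (Set.univ.pi fun _ : Fin n => Set.Icc (-(2⁻¹ : ℝ)) 2⁻¹).indicator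
        (fun t => ∏ i, f i (t i)) t
      = ∏ i, (Set.Icc (-(2⁻¹ : ℝ)) 2⁻¹).indicator (f i) (t i) := by
    intro t
    by_cases ht : t ∈ Set.univ.pi fun _ : Fin n => Set.Icc (-(2⁻¹ : ℝ)) 2⁻¹
    · rw [Set.indicator_of_mem ht]
      exact Finset.prod_congr rfl fun i _ =>
        (Set.indicator_of_mem (ht i (Set.mem_univ i)) (f i)).symm
    · rw [Set.indicator_of_notMem ht]
      simp only [Set.mem_pi, Set.mem_univ, forall_true_left] at ht
      push_neg at ht
      obtain ⟨i, hi⟩ := ht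
      refine (Finset.prod_eq_zero (Finset.mem_univ i) ?_).symm
      exact Set.indicator_of_notMem hi (f i)
  simp_rw [key]
  rw [MeasureTheory.integral_fintype_prod_volume_eq_prod (f := fun i s =>
    (Set.Icc (-(2⁻¹ : ℝ)) 2⁻¹).indicator (f i) s)]
  simp_rw [integral_indicator hIcc]

lemma kernel_eq {n : ℕ} (σ : Equiv.Perm (Fin n)) (x : Fin n → ℝ) :
    (∏ i, ((S (x (σ i) - x i) : ℝ) : ℂ))
    = ∫ t : Fin n → ℝ in Set.univ.pi fun _ => Set.Icc (-(2⁻¹ : ℝ)) 2⁻¹,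
        Complex.exp (2 * Real.pi * Complex.I *
          ((∑ i, t i * (x (σ i) - x i) : ℝ) : ℂ)) := by
  have h : ∀ t : Fin n → ℝ,
      Complex.exp (2 * Real.pi * Complex.I * ((∑ i, t i * (x (σ i) - x i) : ℝ) : ℂ))
      = ∏ i, Complex.exp (2 * Real.pi * Complex.I * ((t i * (x (σ i) - x i) : ℝ) : ℂ)) := by
    intro t
    rw [← Complex.exp_sum]
    congr 1
    push_cast
    rw [Finset.mul_sum]
  simp_rw [h]
  rw [box_prod_integral
    (fun i s => Complex.exp (2 * Real.pi * Complex.I * ((s * (x (σ i) - x i) : ℝ) : ℂ)))]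
  exact Finset.prod_congr rfl fun i _ => S_eq_integral _

theorem sine_determinant_bandlimited (n : ℕ) (hn : 1 ≤ n)
    (g : SchwartzMap (Fin n → ℝ) ℂ)
    (hg : ∀ ξ : Fin n → ℝ, (∀ i, ξ i ∈ Set.Icc (-1 : ℝ) 1) →
      (∫ x : Fin n → ℝ, g x *
        Complex.exp (-(2 * (Real.pi : ℂ) * Complex.I * (∑ i, x i * ξ i : ℝ)))) = 0) :
    (∫ x : Fin n → ℝ,
      g x * ((Matrix.of fun i j => S (x i - x j)).det : ℝ)) = 0 := by
  classical
  have hBoxMeas : MeasurableSet (Set.univ.pi fun _ : Fin n => Set.Icc (-(2⁻¹:ℝ)) 2⁻¹) :=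
    MeasurableSet.univ_pi fun _ => measurableSet_Icc
  haveI : IsFiniteMeasure
      (volume.restrict (Set.univ.pi fun _ : Fin n => Set.Icc (-(2⁻¹:ℝ)) 2⁻¹)) := by
    constructor
    rw [Measure.restrict_apply_univ]
    exact (isCompact_univ_pi fun _ => isCompact_Icc).measure_lt_top
  have hdet : ∀ x : Fin n → ℝ, (((Matrix.of fun i j => S (x i - x j)).det : ℝ) : ℂ)
      = ∑ σ : Equiv.Perm (Fin n),
          ((Equiv.Perm.sign σ : ℤ) : ℂ) * ∏ i, ((S (x (σ i) - x i) : ℝ) : ℂ) := by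
    intro x
    rw [Matrix.det_apply']
    push_cast
    simp [Matrix.of_apply]
  have hKmeas : ∀ σ : Equiv.Perm (Fin n),
      AEStronglyMeasurable (fun x : Fin n → ℝ =>
        ((Equiv.Perm.sign σ : ℤ) : ℂ) * ∏ i, ((S (x (σ i) - x i) : ℝ) : ℂ)) volume := by
    intro σ
    refine (Measurable.const_mul ?_ _).aestronglyMeasurable
    refine Finset.measurable_prod _ fun i _ => ?_
    exact Complex.measurable_ofReal.comp
      (S_measurable.comp ((measurable_pi_apply _).sub (measurable_pi_apply _)))
  have hKbdd : ∀ σ : Equiv.Perm (Fin n), ∀ x : Fin n → ℝ,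
      ‖((Equiv.Perm.sign σ : ℤ) : ℂ) * ∏ i, ((S (x (σ i) - x i) : ℝ) : ℂ)‖ ≤ 1 := by
    intro σ x
    rw [norm_mul]
    have h1 : ‖((Equiv.Perm.sign σ : ℤ) : ℂ)‖ = 1 := by
      rcases Int.units_eq_one_or (Equiv.Perm.sign σ) with h | h <;> simp [h]
    rw [h1, one_mul, norm_prod]
    exact Finset.prod_le_one (fun i _ => norm_nonneg _) (fun i _ => S_norm_le _)
  have hInt : ∀ σ : Equiv.Perm (Fin n),
      Integrable (fun x : Fin n → ℝ =>
        g x * (((Equiv.Perm.sign σ : ℤ) : ℂ) * ∏ i, ((S (x (σ i) - x i) : ℝ) : ℂ))) volume := by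
    intro σ
    have := (g.integrable).bdd_mul (hKmeas σ) (Filter.Eventually.of_forall (hKbdd σ))
    exact this.congr (Filter.Eventually.of_forall fun x => mul_comm _ _)
  simp_rw [hdet, Finset.mul_sum]
  rw [integral_finset_sum _ (fun σ _ => hInt σ)]
  refine Finset.sum_eq_zero fun σ _ => ?_
  have hre : ∀ x : Fin n → ℝ,
      g x * (((Equiv.Perm.sign σ : ℤ) : ℂ) * ∏ i, ((S (x (σ i) - x i) : ℝ) : ℂ))
      = ((Equiv.Perm.sign σ : ℤ) : ℂ) * (g x * ∏ i, ((S (x (σ i) - x i) : ℝ) : ℂ)) := by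
    intro x; ring
  simp_rw [hre, integral_const_mul]
  suffices h0 : (∫ x : Fin n → ℝ, g x * ∏ i, ((S (x (σ i) - x i) : ℝ) : ℂ)) = 0 by
    rw [h0, mul_zero]
  simp_rw [kernel_eq σ]
  simp_rw [← integral_const_mul]
  have hF : Integrable (Function.uncurry fun (x t : Fin n → ℝ) =>
      g x * Complex.exp (2 * Real.pi * Complex.I *
        ((∑ i, t i * (x (σ i) - x i) : ℝ) : ℂ)))
      (volume.prod (volume.restrict
        (Set.univ.pi fun _ : Fin n => Set.Icc (-(2⁻¹:ℝ)) 2⁻¹))) := by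
    refine Integrable.mono' (g := fun z : (Fin n → ℝ) × (Fin n → ℝ) => ‖g z.1‖ * (1:ℝ))
      ((g.integrable.norm).mul_prod (integrable_const 1)) ?_ ?_
    · refine Continuous.aestronglyMeasurable ?_
      refine Continuous.mul (g.continuous.comp continuous_fst) ?_
      refine Complex.continuous_exp.comp (Continuous.mul continuous_const ?_)
      refine Complex.continuous_ofReal.comp ?_
      refine continuous_finset_sum _ fun i _ => ?_
      fun_prop
    · refine Filter.Eventually.of_forall fun z => ?_
      rw [Function.uncurry, norm_mul, norm_exp_I_mul, mul_one]
  rw [integral_integral_swap hF]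
  refine integral_eq_zero_of_ae ?_
  filter_upwards [ae_restrict_mem hBoxMeas] with t ht
  set ξ : Fin n → ℝ := fun i => t i - t (σ⁻¹ i) with hξdef
  have hξ : ∀ i, ξ i ∈ Set.Icc (-1:ℝ) 1 := by
    intro i
    have h1 := ht i (Set.mem_univ i)
    have h2 := ht (σ⁻¹ i) (Set.mem_univ (σ⁻¹ i))
    simp only [Set.mem_Icc] at h1 h2 ⊢
    constructor <;> simp only [hξdef] <;> [linarith [h1.1, h2.2]; linarith [h1.2, h2.1]]
  have hsum : ∀ x : Fin n → ℝ,
      (∑ i, t i * (x (σ i) - x i)) = -∑ i, x i * ξ i := by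
    intro x
    have h2 : ∑ i, x i * t (σ⁻¹ i) = ∑ i, x (σ i) * t i := by
      rw [← Equiv.sum_comp σ (fun i => x i * t (σ⁻¹ i))]
      simp
    simp only [hξdef, mul_sub, Finset.sum_sub_distrib, neg_sub, h2]
    congr 1 <;> exact Finset.sum_congr rfl fun i _ => mul_comm _ _
  have hz := hg ξ hξ
  simp only [Pi.zero_apply]
  rw [← hz]
  refine integral_congr_ae (Filter.Eventually.of_forall fun x => ?_)
  dsimp only
  congr 2
  rw [hsum x]
  push_cast
  ring
end

section
/- Let 0 < a ≤ 1 and define the operator K on ℓ²(aℤ) (with inner product ⟨f,g⟩ = a Σ_{k∈aℤ} f(k)·conj(g(k))) by (Kf)(j) = a Σ_{k∈aℤ} S(j-k) f(k), where S is the sinc function. Then K is an orthogonal projection: K is self-adjoint and K² = K. -/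
/-- The discrete sine kernel operator on `ℓ²(aℤ)`, where the lattice `aℤ` is
parametrized by `ℤ` via `k ↦ a k`. -/
noncomputable def K (a : ℝ) (f : ℤ → ℂ) (j : ℤ) : ℂ :=
  a * ∑' k : ℤ, (S (a * j - a * k) : ℂ) * f k

open MeasureTheory AddCircle Set Complex Real

namespace DSKaux

variable (a : ℝ)

noncomputable def chi [Fact (0 < 1/a)] : AddCircle (1/a) → ℂ :=
  AddCircle.liftIoc (1/a) (-(1/(2*a))) (Set.indicator (Set.Ioc (-(1/2)) (1/2)) (fun _ => (1:ℂ)))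

lemma fourierCoeff_chi (ha : 0 < a) (ha1 : a ≤ 1) [Fact (0 < 1/a)] (n : ℤ) :
    fourierCoeff (chi a) n = ((a * S (a * n) : ℝ) : ℂ) := by
  have ha0 : a ≠ 0 := ne_of_gt ha
  have hT1 : (1:ℝ) ≤ 1/a := by rw [le_one_div (by norm_num) ha]; simpa using ha1
  rw [fourierCoeff_eq_intervalIntegral (chi a) n (-(1/(2*a)))]
  have hle : -(1/(2*a)) ≤ -(1/(2*a)) + 1/a := by
    have : 0 < 1/a := by positivity
    linarith
  rw [intervalIntegral.integral_of_le hle]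
  have hIoc : ∀ x ∈ Set.Ioc (-(1/(2*a))) (-(1/(2*a)) + 1/a),
      fourier (-n) (x : AddCircle (1/a)) • chi a (x : ℝ)
        = Set.indicator (Set.Ioc (-(1/2):ℝ) (1/2))
            (fun y : ℝ => fourier (-n) (y : AddCircle (1/a))) x := by
    intro x hx
    rw [chi, AddCircle.liftIoc_coe_apply hx]
    simp only [Set.indicator_apply]
    split_ifs <;> simp
  rw [MeasureTheory.setIntegral_congr_fun measurableSet_Ioc hIoc,
    MeasureTheory.setIntegral_indicator measurableSet_Ioc]
  have hhalf : -(1/(2*a)) ≤ -(1/2:ℝ) ∧ (1/2:ℝ) ≤ -(1/(2*a)) + 1/a := by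
    constructor
    · rw [neg_le_neg_iff]
      calc (1/2:ℝ) ≤ (1/a)/2 := by linarith
        _ = 1/(2*a) := by field_simp
    · have : 1/(2*a) = (1/a)/2 := by field_simp
      rw [this]; linarith
  have hsub : Set.Ioc (-(1/(2*a))) (-(1/(2*a)) + 1/a) ∩ Set.Ioc (-(1/2):ℝ) (1/2)
      = Set.Ioc (-(1/2):ℝ) (1/2) :=
    Set.inter_eq_right.mpr (Set.Ioc_subset_Ioc hhalf.1 hhalf.2)
  rw [hsub, ← intervalIntegral.integral_of_le (by norm_num : (-(1/2):ℝ) ≤ 1/2)]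
  rcases eq_or_ne n 0 with rfl | hn
  · simp only [neg_zero]
    have : ∀ x : ℝ, fourier (0:ℤ) (x : AddCircle (1/a)) = (1:ℂ) := fun x => fourier_zero
    simp only [this]
    rw [intervalIntegral.integral_const]
    simp [S, one_div_one_div]
    ring
  · have hn0 : (n:ℝ) ≠ 0 := Int.cast_ne_zero.mpr hn
    set θ : ℝ := π * n * a with hθdef
    have hθ0 : θ ≠ 0 := by
      apply mul_ne_zero (mul_ne_zero Real.pi_ne_zero hn0) ha0
    set c : ℂ := (↑(-(2*θ)) : ℂ) * Complex.I with hcdef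
    have hc : c ≠ 0 := by
      apply mul_ne_zero _ Complex.I_ne_zero
      simpa using hθ0
    have hfn : ∀ x : ℝ, fourier (-n) (x : AddCircle (1/a)) = Complex.exp (c * x) := by
      intro x
      rw [fourier_coe_apply]
      congr 1
      rw [hcdef, hθdef]
      push_cast
      field_simp
    simp only [hfn]
    rw [integral_exp_mul_complex hc]
    have e1 : c * ((1:ℝ)/2 : ℝ) = (↑(-θ) : ℂ) * Complex.I := by
      rw [hcdef]; push_cast; ring
    have e2 : c * (-(1/2:ℝ) : ℝ) = (↑θ : ℂ) * Complex.I := by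
      rw [hcdef]; push_cast; ring
    rw [e1, e2]
    have key : Complex.exp ((↑(-θ):ℂ) * Complex.I) - Complex.exp ((↑θ:ℂ) * Complex.I)
        = -2 * Complex.I * Complex.sin θ := by
      rw [Complex.exp_mul_I, Complex.exp_mul_I]
      push_cast
      rw [Complex.cos_neg, Complex.sin_neg]
      ring
    rw [key]
    have hS : S (a * n) = Real.sin θ / θ := by
      rw [S, if_neg (mul_ne_zero ha0 hn0), hθdef,
        show π * (a * (n:ℝ)) = π * n * a by ring]
    rw [hS, hcdef, real_smul, one_div_one_div, ← Complex.ofReal_sin]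
    have hdiv : (-2 * Complex.I * ((Real.sin θ : ℝ):ℂ)) / ((↑(-(2*θ)):ℂ) * Complex.I)
        = ((Real.sin θ : ℝ):ℂ) / ((θ:ℝ):ℂ) := by
      rw [div_eq_div_iff hc (by exact_mod_cast hθ0 : ((θ:ℝ):ℂ) ≠ 0), hcdef]
      push_cast
      ring
    rw [hdiv]
    push_cast
    ring

lemma measurable_chi [Fact (0 < 1/a)] : Measurable (chi a) := by
  unfold chi AddCircle.liftIoc
  exact ((measurable_const.indicator measurableSet_Ioc).comp measurable_subtype_coe).comp
    (measurableEquivIoc (1/a) (-(1/(2*a)))).measurable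

lemma chi_cases [Fact (0 < 1/a)] (x : AddCircle (1/a)) : chi a x = 0 ∨ chi a x = 1 := by
  unfold chi AddCircle.liftIoc
  simp only [Function.comp_apply, Set.restrict_apply, Set.indicator_apply]
  split_ifs <;> simp

lemma star_chi [Fact (0 < 1/a)] (x : AddCircle (1/a)) :
    (starRingEnd ℂ) (chi a x) = chi a x := by
  rcases chi_cases a x with h | h <;> simp [h]

lemma chi_sq [Fact (0 < 1/a)] (x : AddCircle (1/a)) : chi a x * chi a x = chi a x := by
  rcases chi_cases a x with h | h <;> simp [h]

lemma norm_chi [Fact (0 < 1/a)] (x : AddCircle (1/a)) : ‖chi a x‖ ≤ 1 := by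
  rcases chi_cases a x with h | h <;> simp [h]

lemma memLp_chi_mul_fourier [Fact (0 < 1/a)] (j : ℤ) :
    MemLp (fun x => chi a x * fourier j x) 2 (haarAddCircle : Measure (AddCircle (1/a))) := by
  refine MemLp.of_bound ?_ 1 (Filter.Eventually.of_forall fun x => ?_)
  · exact ((measurable_chi a).aestronglyMeasurable.mul
      (map_continuous (fourier j)).measurable.aestronglyMeasurable)
  · rw [norm_mul, show ‖fourier j x‖ = 1 from Circle.norm_coe _, mul_one]
    exact norm_chi a x

lemma inner_chi_fourier_basis [hF : Fact (0 < 1/a)] (j k : ℤ) :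
    inner (𝕜 := ℂ) ((memLp_chi_mul_fourier a j).toLp _) (fourierBasis (T := 1/a) k)
      = fourierCoeff (chi a) (j - k) := by
  have hb : fourierBasis (T := 1/a) k = fourierLp 2 k := congrFun coe_fourierBasis k
  rw [hb, MeasureTheory.L2.inner_def]
  rw [show fourierCoeff (chi a) (j - k)
      = ∫ t : AddCircle (1/a), fourier (-(j-k)) t • chi a t ∂haarAddCircle from rfl]
  apply integral_congr_ae
  filter_upwards [(memLp_chi_mul_fourier a j).coeFn_toLp, coeFn_fourierLp 2 k]
    with x hx1 hx2
  rw [hx1, hx2, RCLike.inner_apply, smul_eq_mul, map_mul, star_chi,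
    show -(j-k) = -j + k by ring, fourier_add, ← fourier_neg]
  ring

lemma inner_chi_mul [hF : Fact (0 < 1/a)] (j : ℤ)
    (g : Lp ℂ 2 (haarAddCircle : Measure (AddCircle (1/a)))) :
    inner (𝕜 := ℂ) ((memLp_chi_mul_fourier a j).toLp _) g
      = fourierCoeff (fun x => chi a x * g x) j := by
  rw [MeasureTheory.L2.inner_def,
    show fourierCoeff (fun x => chi a x * g x) j
      = ∫ t : AddCircle (1/a), fourier (-j) t • (chi a t * g t) ∂haarAddCircle from rfl]
  apply integral_congr_ae
  filter_upwards [(memLp_chi_mul_fourier a j).coeFn_toLp] with x hx1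
  rw [hx1, RCLike.inner_apply, smul_eq_mul, map_mul, star_chi, ← fourier_neg]
  ring

lemma fourierCoeff_chi_mul [hF : Fact (0 < 1/a)]
    (g : Lp ℂ 2 (haarAddCircle : Measure (AddCircle (1/a)))) (j : ℤ) :
    fourierCoeff (fun x => chi a x * g x) j
      = ∑' k : ℤ, fourierCoeff (chi a) (j - k) * fourierBasis.repr g k := by
  rw [← inner_chi_mul a j g,
    ← (fourierBasis (T := 1/a)).tsum_inner_mul_inner ((memLp_chi_mul_fourier a j).toLp _) g]
  refine tsum_congr fun k => ?_
  rw [inner_chi_fourier_basis a j k, (fourierBasis (T := 1/a)).repr_apply_apply]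

lemma fourierCoeff_congr_ae {T : ℝ} [hT : Fact (0 < T)] {u v : AddCircle T → ℂ}
    (h : u =ᵐ[haarAddCircle] v) (n : ℤ) : fourierCoeff u n = fourierCoeff v n := by
  apply integral_congr_ae
  filter_upwards [h] with x hx
  rw [hx]

noncomputable def Ff [Fact (0 < 1/a)] (f : ℤ → ℂ) (hf : Memℓp f 2) :
    Lp ℂ 2 (haarAddCircle : Measure (AddCircle (1/a))) :=
  fourierBasis.repr.symm (⟨f, hf⟩ : lp (fun _ : ℤ => ℂ) 2)

lemma repr_Ff [Fact (0 < 1/a)] (f : ℤ → ℂ) (hf : Memℓp f 2) (k : ℤ) :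
    fourierBasis.repr (Ff a f hf) k = f k := by
  rw [Ff, LinearIsometryEquiv.apply_symm_apply]

lemma memLp_chi_mul [Fact (0 < 1/a)]
    (g : Lp ℂ 2 (haarAddCircle : Measure (AddCircle (1/a)))) :
    MemLp (fun x => chi a x * g x) 2 (haarAddCircle : Measure (AddCircle (1/a))) := by
  refine MemLp.of_le (Lp.memLp g)
    ((measurable_chi a).aestronglyMeasurable.mul (Lp.aestronglyMeasurable g))
    (Filter.Eventually.of_forall fun x => ?_)
  rw [norm_mul]
  calc ‖chi a x‖ * ‖g x‖ ≤ 1 * ‖g x‖ :=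
        mul_le_mul_of_nonneg_right (norm_chi a x) (norm_nonneg _)
    _ = ‖g x‖ := one_mul _

lemma K_eq (ha : 0 < a) (ha1 : a ≤ 1) [Fact (0 < 1/a)] (f : ℤ → ℂ) (hf : Memℓp f 2) (j : ℤ) :
    K a f j = fourierCoeff (fun x => chi a x * (Ff a f hf) x) j := by
  rw [fourierCoeff_chi_mul a (Ff a f hf) j, K, ← tsum_mul_left]
  refine tsum_congr fun k => ?_
  rw [repr_Ff, fourierCoeff_chi a ha ha1 (j - k),
    show a * ((j:ℤ):ℝ) - a * ((k:ℤ):ℝ) = a * (((j - k : ℤ)):ℝ) by push_cast; ring]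
  push_cast
  ring

lemma repr_KLp (ha : 0 < a) (ha1 : a ≤ 1) [Fact (0 < 1/a)] (f : ℤ → ℂ) (hf : Memℓp f 2)
    (j : ℤ) :
    fourierBasis.repr ((memLp_chi_mul a (Ff a f hf)).toLp _) j = K a f j := by
  rw [fourierBasis_repr, K_eq a ha ha1 f hf j]
  exact fourierCoeff_congr_ae ((memLp_chi_mul a (Ff a f hf)).coeFn_toLp) j

lemma K_memℓp (ha : 0 < a) (ha1 : a ≤ 1) [Fact (0 < 1/a)] (f : ℤ → ℂ) (hf : Memℓp f 2) :
    Memℓp (K a f) 2 := by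
  have he : K a f = ⇑(fourierBasis.repr ((memLp_chi_mul a (Ff a f hf)).toLp _)) :=
    funext fun j => (repr_KLp a ha ha1 f hf j).symm
  rw [he]
  exact lp.memℓp _

lemma K_idem (ha : 0 < a) (ha1 : a ≤ 1) [Fact (0 < 1/a)] (f : ℤ → ℂ) (hf : Memℓp f 2) :
    K a (K a f) = K a f := by
  have hKf : Memℓp (K a f) 2 := K_memℓp a ha ha1 f hf
  have key : Ff a (K a f) hKf = (memLp_chi_mul a (Ff a f hf)).toLp _ := by
    have h2 : (⟨K a f, hKf⟩ : lp (fun _ : ℤ => ℂ) 2)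
        = fourierBasis.repr ((memLp_chi_mul a (Ff a f hf)).toLp _) :=
      lp.ext (funext fun j => (repr_KLp a ha ha1 f hf j).symm)
    rw [Ff, h2, LinearIsometryEquiv.symm_apply_apply]
  funext j
  rw [K_eq a ha ha1 (K a f) hKf j, key]
  have h1 : fourierCoeff (fun x => chi a x * ((memLp_chi_mul a (Ff a f hf)).toLp _) x) j
      = fourierCoeff (fun x => chi a x * (chi a x * (Ff a f hf) x)) j := by
    apply fourierCoeff_congr_ae
    filter_upwards [(memLp_chi_mul a (Ff a f hf)).coeFn_toLp] with x hx
    rw [hx]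
  rw [h1,
    show (fun x => chi a x * (chi a x * (Ff a f hf) x))
      = fun x => chi a x * (Ff a f hf) x from
      funext fun x => by rw [← mul_assoc, chi_sq],
    ← K_eq a ha ha1 f hf j]

lemma K_adj (ha : 0 < a) (ha1 : a ≤ 1) [Fact (0 < 1/a)] (f g : ℤ → ℂ)
    (hf : Memℓp f 2) (hg : Memℓp g 2) :
    ∑' j : ℤ, K a f j * (starRingEnd ℂ) (g j)
      = ∑' j : ℤ, f j * (starRingEnd ℂ) (K a g j) := by
  set F := Ff a f hf with hF
  set G := Ff a g hg with hG
  set X := (memLp_chi_mul a F).toLp _ with hX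
  set Y := (memLp_chi_mul a G).toLp _ with hY
  have hinner : inner (𝕜 := ℂ) X G = inner (𝕜 := ℂ) F Y := by
    rw [MeasureTheory.L2.inner_def, MeasureTheory.L2.inner_def]
    apply integral_congr_ae
    filter_upwards [(memLp_chi_mul a F).coeFn_toLp, (memLp_chi_mul a G).coeFn_toLp]
      with x h1 h2
    rw [h1, h2, RCLike.inner_apply, RCLike.inner_apply, map_mul, star_chi]
    ring
  have hXb : ∀ j : ℤ, inner (𝕜 := ℂ) X (fourierBasis (T := 1/a) j)
      = (starRingEnd ℂ) (K a f j) := by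
    intro j
    rw [← inner_conj_symm, ← (fourierBasis (T := 1/a)).repr_apply_apply,
      repr_KLp a ha ha1 f hf j, starRingEnd_apply]
  have hFb : ∀ j : ℤ, inner (𝕜 := ℂ) F (fourierBasis (T := 1/a) j)
      = (starRingEnd ℂ) (f j) := by
    intro j
    rw [← inner_conj_symm, ← (fourierBasis (T := 1/a)).repr_apply_apply, hF,
      repr_Ff a f hf j, starRingEnd_apply]
  have e1 : inner (𝕜 := ℂ) X G = ∑' j : ℤ, (starRingEnd ℂ) (K a f j) * g j := by
    rw [← (fourierBasis (T := 1/a)).tsum_inner_mul_inner X G]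
    refine tsum_congr fun j => ?_
    rw [hXb j, ← (fourierBasis (T := 1/a)).repr_apply_apply, hG, repr_Ff]
  have e2 : inner (𝕜 := ℂ) F Y = ∑' j : ℤ, (starRingEnd ℂ) (f j) * K a g j := by
    rw [← (fourierBasis (T := 1/a)).tsum_inner_mul_inner F Y]
    refine tsum_congr fun j => ?_
    rw [hFb j, ← (fourierBasis (T := 1/a)).repr_apply_apply, hY,
      repr_KLp a ha ha1 g hg j]
  calc ∑' j : ℤ, K a f j * (starRingEnd ℂ) (g j)
      = star (∑' j : ℤ, (starRingEnd ℂ) (K a f j) * g j) := by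
        rw [tsum_star]
        refine tsum_congr fun j => ?_
        simp only [star_mul', starRingEnd_apply, star_star]
    _ = star (inner (𝕜 := ℂ) X G) := by rw [e1]
    _ = star (inner (𝕜 := ℂ) F Y) := by rw [hinner]
    _ = ∑' j : ℤ, f j * (starRingEnd ℂ) (K a g j) := by
        rw [e2, tsum_star]
        refine tsum_congr fun j => ?_
        simp only [star_mul', starRingEnd_apply, star_star]

end DSKaux

theorem discrete_sine_kernel_is_projection (a : ℝ) (ha : 0 < a) (ha1 : a ≤ 1) :
    (∀ f g : ℤ → ℂ, Memℓp f 2 → Memℓp g 2 →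
      a * ∑' j : ℤ, (K a f j) * (starRingEnd ℂ) (g j) =
        a * ∑' j : ℤ, f j * (starRingEnd ℂ) (K a g j)) ∧
    (∀ f : ℤ → ℂ, Memℓp f 2 → K a (K a f) = K a f) := by
  haveI : Fact (0 < 1/a) := ⟨by positivity⟩
  constructor
  · intro f g hf hg
    rw [DSKaux.K_adj a ha ha1 f g hf hg]
  · intro f hf
    exact DSKaux.K_idem a ha ha1 f hf
end
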